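/- Let C ⊂ ℝ^d be a bounded convex set with nonempty interior and let s₀ > 0. Then there exists c̃ > 0 such that for all x ∈ C and all s ∈ (0, s₀), λ^d(C ∩ B₂(x,s)) ≥ c̃ · λ^d(B₂(x,s)), where B₂ denotes Euclidean balls and λ^d is Lebesgue measure. -/

import Mathlib

open MeasureTheory Metric

/-- A bounded convex set with nonempty interior is "peakless": its Lebesgue
density is uniformly bounded below at all points of `C` and all scales `s ∈ (0,s₀)`. -/
theorem stmt6 (d : ℕ) (C : Set (EuclideanSpace ℝ (Fin d)))
    (hC : Convex ℝ C) (hB : Bornology.IsBounded C) (hint : (interior C).Nonempty)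
    (s₀ : ℝ) (hs₀ : 0 < s₀) :
    ∃ c : ℝ, 0 < c ∧ ∀ x ∈ C, ∀ s ∈ Set.Ioo (0 : ℝ) s₀,
      ENNReal.ofReal c * volume (ball x s) ≤ volume (C ∩ ball x s) := by
  rcases Nat.eq_zero_or_pos d with hd | hd
  · subst hd
    haveI : Subsingleton (EuclideanSpace ℝ (Fin 0)) := inferInstance
    refine ⟨1, one_pos, ?_⟩
    rintro x hx s ⟨hs0, hss⟩
    rw [ENNReal.ofReal_one, one_mul]
    apply measure_mono
    intro z hz
    exact ⟨(Subsingleton.elim z x) ▸ hx, hz⟩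
  haveI : Nonempty (Fin d) := Fin.pos_iff_nonempty.mp hd
  haveI : Nontrivial (EuclideanSpace ℝ (Fin d)) := inferInstance
  obtain ⟨x₀, hx₀⟩ := hint
  obtain ⟨r, hr, hball⟩ := Metric.isOpen_iff.mp isOpen_interior x₀ hx₀
  have hballC : ball x₀ r ⊆ C := hball.trans interior_subset
  have hx₀C : x₀ ∈ C := interior_subset hx₀
  obtain ⟨R, hR⟩ := hB.subset_closedBall x₀
  have hR0 : 0 ≤ R := by simpa using hR hx₀C
  set M := R + r + s₀ with hM
  have hM0 : 0 < M := by positivity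
  refine ⟨(r / M) ^ d, by positivity, ?_⟩
  rintro x hx s ⟨hs0, hss⟩
  set t := s / M with ht
  have ht0 : 0 < t := by positivity
  have ht1 : t < 1 := by
    rw [ht, div_lt_one hM0, hM]
    nlinarith
  set c' : EuclideanSpace ℝ (Fin d) := x + t • (x₀ - x) with hc'
  have hkey : ball c' (t * r) ⊆ C ∩ ball x s := by
    rintro z hz
    rw [mem_ball, dist_eq_norm] at hz
    set y : EuclideanSpace ℝ (Fin d) := x₀ + t⁻¹ • (z - c') with hy
    have hyx : t • (y - x) = z - x := by
      rw [hy, hc']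
      match_scalars <;> field_simp <;> ring
    have hymem : y ∈ ball x₀ r := by
      rw [mem_ball, dist_eq_norm, hy, add_sub_cancel_left, norm_smul,
        norm_inv, Real.norm_of_nonneg ht0.le]
      calc t⁻¹ * ‖z - c'‖ < t⁻¹ * (t * r) := by
            apply mul_lt_mul_of_pos_left hz (by positivity)
        _ = r := by field_simp
    have hyC : y ∈ C := hballC hymem
    constructor
    · have hconv : (1 - t) • x + t • y ∈ C :=
        hC hx hyC (by linarith) ht0.le (by ring)
      have : z = (1 - t) • x + t • y := by
        have := hyx
        rw [smul_sub] at this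
        have hz' : z = x + (t • y - t • x) := by
          rw [this]; abel
        rw [hz']; module
      rwa [this]
    · rw [mem_ball, dist_eq_norm, ← hyx, norm_smul, Real.norm_of_nonneg ht0.le]
      have hyx' : ‖y - x‖ ≤ ‖y - x₀‖ + ‖x₀ - x‖ := norm_sub_le_norm_sub_add_norm_sub _ _ _
      have h1 : ‖y - x₀‖ < r := by rw [← dist_eq_norm]; exact mem_ball.mp hymem
      have h2 : ‖x₀ - x‖ ≤ R := by
        rw [norm_sub_rev, ← dist_eq_norm]; exact hR hx
      have : t * ‖y - x‖ < t * M := by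
        apply mul_lt_mul_of_pos_left _ ht0
        rw [hM]; linarith
      calc t * ‖y - x‖ < t * M := this
        _ = s := by rw [ht]; field_simp
  calc ENNReal.ofReal ((r / M) ^ d) * volume (ball x s)
      = ENNReal.ofReal ((r / M) ^ d) *
        (ENNReal.ofReal (s ^ Module.finrank ℝ (EuclideanSpace ℝ (Fin d))) * volume (ball (0 : EuclideanSpace ℝ (Fin d)) 1)) := by
        rw [Measure.addHaar_ball _ _ hs0.le]
    _ = ENNReal.ofReal ((t * r) ^ Module.finrank ℝ (EuclideanSpace ℝ (Fin d))) * volume (ball (0 : EuclideanSpace ℝ (Fin d)) 1) := by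
        rw [← mul_assoc, ← ENNReal.ofReal_mul (by positivity), finrank_euclideanSpace_fin]
        congr 2
        rw [← mul_pow, ht]
        ring
    _ = volume (ball c' (t * r)) := (Measure.addHaar_ball _ _ (by positivity)).symm
    _ ≤ volume (C ∩ ball x s) := measure_mono hkey
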